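/- arXiv:math/0506193 — 4 statements merged into one kernel-verified Lean document; each statement's English description precedes it below -/
import Mathlib

section
/- In the Artin braid group B(A_n), with c_n := σ_n and c_k := σ_k^{-1} c_{k+1} σ_k for 1 ≤ k ≤ n−1, the relation σ_n c_k σ_n = c_k σ_n c_k holds for all 1 ≤ k ≤ n−1. -/
/-- The braid relations of type `A_n` on generators `σ_1, …, σ_n`
(encoded with `0`-based indices `0, …, n-1`). -/
def braidRelsA (n : ℕ) : Set (FreeGroup (Fin n)) :=
  {r | (∃ i j : Fin n, (i : ℕ) + 1 = (j : ℕ) ∧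
        r = .of i * .of j * .of i * (.of j * .of i * .of j)⁻¹) ∨
      (∃ i j : Fin n, (i : ℕ) + 1 < (j : ℕ) ∧
        r = .of i * .of j * (.of j * .of i)⁻¹)}

/-- The Artin braid group `B(A_n)` with generators `σ_1, …, σ_n`. -/
abbrev BraidA (n : ℕ) := PresentedGroup (braidRelsA n)

/-- The generator `σ_{k+1}` of `B(A_n)` (`0`-based index `k`). -/
def σA {n : ℕ} (k : ℕ) : BraidA n :=
  if h : k < n then PresentedGroup.of ⟨k, h⟩ else 1

/-- The elements `c_k` (`0`-based: `cA n k` is `c_{k+1}` of the paper):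
`c_n := σ_n` and `c_k := σ_k⁻¹ * c_{k+1} * σ_k`. -/
def cA (n : ℕ) (k : ℕ) : BraidA n :=
  if _h : k + 1 < n then (σA k)⁻¹ * cA n (k + 1) * σA k
  else if _h2 : k < n then σA k else 1
  termination_by n - k
  decreasing_by omega

lemma braid_rel_eq_one {n : ℕ} {r : FreeGroup (Fin n)} (h : r ∈ braidRelsA n) :
    PresentedGroup.mk (braidRelsA n) r = 1 := by
  have : r ∈ Subgroup.normalClosure (braidRelsA n) := Subgroup.subset_normalClosure h
  exact (QuotientGroup.eq_one_iff r).mpr this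

lemma braid_adj {n : ℕ} (i j : Fin n) (hij : (i : ℕ) + 1 = (j : ℕ)) :
    (PresentedGroup.of i : BraidA n) * .of j * .of i = .of j * .of i * .of j := by
  have h : (FreeGroup.of i * .of j * .of i * (.of j * .of i * .of j)⁻¹ : FreeGroup (Fin n))
      ∈ braidRelsA n := Or.inl ⟨i, j, hij, rfl⟩
  have := braid_rel_eq_one h
  simp only [map_mul, map_inv] at this
  have := mul_inv_eq_one.mp this
  exact this

lemma braid_comm {n : ℕ} (i j : Fin n) (hij : (i : ℕ) + 1 < (j : ℕ)) :
    (PresentedGroup.of i : BraidA n) * .of j = .of j * .of i := by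
  have h : (FreeGroup.of i * .of j * (.of j * .of i)⁻¹ : FreeGroup (Fin n))
      ∈ braidRelsA n := Or.inr ⟨i, j, hij, rfl⟩
  have := braid_rel_eq_one h
  simp only [map_mul, map_inv] at this
  exact mul_inv_eq_one.mp this

/-- In `B(A_n)`, with `c_n := σ_n` and `c_k := σ_k⁻¹ c_{k+1} σ_k`, the relation
`σ_n c_k σ_n = c_k σ_n c_k` holds for all `1 ≤ k ≤ n-1` (`0`-based: `k + 1 < n`,
and `σ_n` is `σA (n-1)`). -/
theorem σA_cA_braid (n : ℕ) (k : ℕ) (hk : k + 1 < n) :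
    σA (n := n) (n - 1) * cA n k * σA (n := n) (n - 1)
      = cA n k * σA (n := n) (n - 1) * cA n k := by
  have hkn : k < n := by omega
  have hck : cA n k = (σA k)⁻¹ * cA n (k + 1) * σA k := by
    rw [cA]; simp [hk]
  set s : BraidA n := σA (n - 1) with hs
  set u : BraidA n := σA k with hu
  by_cases hbase : k + 1 = n - 1
  · -- base case: c_{k+1} = σ_{n-1} = s
    have hc1 : cA n (k + 1) = s := by
      rw [cA, dif_neg (show ¬ (k + 1 + 1 < n) by omega), dif_pos hk, hbase, ← hs]
    have hb : s * u * s = u * s * u := by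
      have := braid_adj (n := n) ⟨k, hkn⟩ ⟨n - 1, by omega⟩ (by simpa using hbase)
      have hu' : u = PresentedGroup.of (⟨k, hkn⟩ : Fin n) := by
        rw [hu, σA]; simp [hkn]
      have hs' : s = PresentedGroup.of (⟨n - 1, by omega⟩ : Fin n) := by
        rw [hs, σA]; simp [show n - 1 < n by omega]
      rw [hu', hs']
      exact this.symm
    rw [hck, hc1]
    calc s * (u⁻¹ * s * u) * s = s * u⁻¹ * (s * u * s) := by group
      _ = s * u⁻¹ * (u * s * u) := by rw [hb]
      _ = u⁻¹ * ((u * s * u) * u⁻¹ * (s * u)) := by group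
      _ = u⁻¹ * ((s * u * s) * u⁻¹ * (s * u)) := by rw [hb]
      _ = (u⁻¹ * s * u) * s * (u⁻¹ * s * u) := by group
  · -- inductive step
    have ih := σA_cA_braid n (k + 1) (by omega)
    rw [← hs] at ih
    set d : BraidA n := cA n (k + 1) with hd
    have hc : u * s = s * u := by
      have := braid_comm (n := n) ⟨k, hkn⟩ ⟨n - 1, by omega⟩ (by simp; omega)
      have hu' : u = PresentedGroup.of (⟨k, hkn⟩ : Fin n) := by
        rw [hu, σA]; simp [hkn]
      have hs' : s = PresentedGroup.of (⟨n - 1, by omega⟩ : Fin n) := by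
        rw [hs, σA]; simp [show n - 1 < n by omega]
      rw [hu', hs']; exact this
    rw [hck]
    calc s * (u⁻¹ * d * u) * s
        = u⁻¹ * ((u * s) * u⁻¹) * d * (u * s) := by group
      _ = u⁻¹ * ((s * u) * u⁻¹) * d * (s * u) := by rw [hc]
      _ = u⁻¹ * (s * d * s) * u := by group
      _ = u⁻¹ * (d * s * d) * u := by rw [ih]
      _ = u⁻¹ * d * ((s * u) * u⁻¹) * d * u := by group
      _ = u⁻¹ * d * ((u * s) * u⁻¹) * d * u := by rw [hc]
      _ = (u⁻¹ * d * u) * s * (u⁻¹ * d * u) := by group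
  termination_by n - k
end

section
/- In the Artin braid group B(A_n), define c_n := σ_n and c_k := σ_k^{-1} c_{k+1} σ_k for 1 ≤ k ≤ n−1. Then c_i c_j c_i = c_j c_i c_j for all 1 ≤ i, j ≤ n−1 with i ≠ j. -/
lemma rel_eq {n : ℕ} {a b : FreeGroup (Fin n)} (h : a * b⁻¹ ∈ braidRelsA n) :
    PresentedGroup.mk (braidRelsA n) a = PresentedGroup.mk (braidRelsA n) b := by
  have : PresentedGroup.mk (braidRelsA n) (a * b⁻¹) = 1 :=
    (QuotientGroup.eq_one_iff _).mpr (Subgroup.subset_normalClosure h)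
  rw [map_mul, map_inv] at this
  exact mul_inv_eq_one.mp this

lemma braid_adj_s2 {n : ℕ} {k : ℕ} (h : k + 1 < n) :
    σA (n := n) k * σA (k+1) * σA k = σA (k+1) * σA k * σA (k+1) := by
  have hk : k < n := by omega
  rw [σA, σA, dif_pos h, dif_pos hk]
  exact rel_eq (Or.inl ⟨⟨k, hk⟩, ⟨k+1, h⟩, rfl, by simp [PresentedGroup.of]⟩)

lemma braid_far {n : ℕ} {k m : ℕ} (hkm : k + 1 < m) (hm : m < n) :
    σA (n := n) k * σA m = σA m * σA k := by
  have hk : k < n := by omega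
  rw [σA, σA, dif_pos hm, dif_pos hk]
  exact rel_eq (Or.inr ⟨⟨k, hk⟩, ⟨m, hm⟩, hkm, by simp [PresentedGroup.of]⟩)

lemma comm_σ_c (n k m : ℕ) (h : k + 2 ≤ m) :
    σA (n := n) k * cA n m = cA n m * σA k := by
  rw [cA]
  by_cases h1 : m + 1 < n
  · rw [dif_pos h1]
    have ihc := comm_σ_c n k (m+1) (by omega)
    have hf : σA (n := n) k * σA m = σA m * σA k := braid_far (by omega) (by omega)
    have hfi : σA (n := n) k * (σA m)⁻¹ = (σA m)⁻¹ * σA k := (Commute.inv_right hf).eq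
    calc σA (n := n) k * ((σA m)⁻¹ * cA n (m+1) * σA m)
        = (σA k * (σA m)⁻¹) * (cA n (m+1) * σA m) := by group
      _ = ((σA m)⁻¹ * σA k) * (cA n (m+1) * σA m) := by rw [hfi]
      _ = (σA m)⁻¹ * (σA k * cA n (m+1)) * σA m := by group
      _ = (σA m)⁻¹ * (cA n (m+1) * σA k) * σA m := by rw [ihc]
      _ = (σA m)⁻¹ * cA n (m+1) * (σA k * σA m) := by group
      _ = (σA m)⁻¹ * cA n (m+1) * (σA m * σA k) := by rw [hf]
      _ = (σA m)⁻¹ * cA n (m+1) * σA m * σA k := by group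
  · rw [dif_neg h1]
    by_cases h2 : m < n
    · rw [dif_pos h2]; exact braid_far (by omega) h2
    · rw [dif_neg h2]; group
  termination_by n - m
  decreasing_by omega

lemma sigma_c (n k : ℕ) (h : k + 1 < n) :
    σA (n := n) k * cA n (k+1) * σA k = cA n (k+1) * σA k * cA n (k+1) := by
  by_cases h2 : k + 1 + 1 < n
  · have ihbc : σA (n := n) (k+1) * cA n (k+2) * σA (k+1)
        = cA n (k+2) * σA (k+1) * cA n (k+2) := sigma_c n (k+1) h2
    set a := σA (n := n) k with ha
    set b := σA (n := n) (k+1) with hb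
    set c := cA n (k+2) with hc
    have hab : a * b * a = b * a * b := braid_adj_s2 h
    have hac : a * c = c * a := comm_σ_c n k (k+2) (by omega)
    have haci : a⁻¹ * c = c * a⁻¹ := (Commute.inv_left hac).eq
    have hbab : b * a * b⁻¹ = a⁻¹ * (b * a) := by
      apply mul_left_cancel (a := a)
      calc a * (b * a * b⁻¹) = (a * b * a) * b⁻¹ := by group
        _ = (b * a * b) * b⁻¹ := by rw [hab]
        _ = a * (a⁻¹ * (b * a)) := by group
    have hcA : cA n (k+1) = b⁻¹ * c * b := by
      rw [cA, dif_pos h2]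
    rw [hcA]
    have hL : a * (b⁻¹ * c * b) * a = b⁻¹ * a⁻¹ * (b * c * b) * (a * b) := by
      calc a * (b⁻¹ * c * b) * a
          = b⁻¹ * ((b * a * b⁻¹) * (c * b * a)) := by group
        _ = b⁻¹ * ((a⁻¹ * (b * a)) * (c * b * a)) := by rw [hbab]
        _ = b⁻¹ * a⁻¹ * b * (a * c) * (b * a) := by group
        _ = b⁻¹ * a⁻¹ * b * (c * a) * (b * a) := by rw [hac]
        _ = b⁻¹ * a⁻¹ * (b * c) * (a * b * a) := by group
        _ = b⁻¹ * a⁻¹ * (b * c) * (b * a * b) := by rw [hab]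
        _ = b⁻¹ * a⁻¹ * (b * c * b) * (a * b) := by group
    have hR : (b⁻¹ * c * b) * a * (b⁻¹ * c * b) = b⁻¹ * a⁻¹ * (b * c * b) * (a * b) := by
      calc (b⁻¹ * c * b) * a * (b⁻¹ * c * b)
          = b⁻¹ * c * (b * a * b⁻¹) * (c * b) := by group
        _ = b⁻¹ * c * (a⁻¹ * (b * a)) * (c * b) := by rw [hbab]
        _ = b⁻¹ * (c * a⁻¹) * b * (a * c) * b := by group
        _ = b⁻¹ * (a⁻¹ * c) * b * (c * a) * b := by rw [← haci, hac]
        _ = b⁻¹ * a⁻¹ * (c * b * c) * (a * b) := by group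
        _ = b⁻¹ * a⁻¹ * (b * c * b) * (a * b) := by rw [← ihbc]
    rw [hL, hR]
  · have hbase : cA n (k+1) = σA (k+1) := by
      rw [cA, dif_neg h2, dif_pos h]
    rw [hbase]
    exact braid_adj_s2 h
  termination_by n - k
  decreasing_by omega

lemma adj_c (n k : ℕ) (h : k + 1 < n) :
    cA n k * cA n (k+1) * cA n k = cA n (k+1) * cA n k * cA n (k+1) := by
  set s := σA (n := n) k with hs
  set c := cA n (k+1) with hc
  have hck : cA n k = s⁻¹ * c * s := by rw [cA, dif_pos h]
  have hscs : s * c * s = c * s * c := sigma_c n k h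
  have h1 : s * c * s⁻¹ = c⁻¹ * (s * c) := by
    apply mul_left_cancel (a := c)
    calc c * (s * c * s⁻¹) = (c * s * c) * s⁻¹ := by group
      _ = (s * c * s) * s⁻¹ := by rw [← hscs]
      _ = c * (c⁻¹ * (s * c)) := by group
  rw [hck]
  have hL : (s⁻¹ * c * s) * c * (s⁻¹ * c * s) = c * c * s := by
    calc (s⁻¹ * c * s) * c * (s⁻¹ * c * s)
        = s⁻¹ * c * (s * c * s⁻¹) * (c * s) := by group
      _ = s⁻¹ * c * (c⁻¹ * (s * c)) * (c * s) := by rw [h1]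
      _ = s⁻¹ * (s * c * c) * s := by group
      _ = c * c * s := by group
  have hR : c * (s⁻¹ * c * s) * c = c * c * s := by
    calc c * (s⁻¹ * c * s) * c
        = c * s⁻¹ * (c * s * c) := by group
      _ = c * s⁻¹ * (s * c * s) := by rw [← hscs]
      _ = c * c * s := by group
  rw [hL, hR]

lemma key (n i j : ℕ) (hj : j + 1 < n) (hij : i < j) :
    cA n i * cA n j * cA n i = cA n j * cA n i * cA n j := by
  by_cases hadj : j = i + 1
  · subst hadj; exact adj_c n i (by omega)
  · have hgap : i + 2 ≤ j := by omega
    have hi1 : i + 1 < n := by omega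
    have hci : cA n i = (σA i)⁻¹ * cA n (i+1) * σA i := by rw [cA, dif_pos hi1]
    have hcomm : σA (n := n) i * cA n j = cA n j * σA i := comm_σ_c n i j hgap
    have hcommi : (σA (n := n) i)⁻¹ * cA n j = cA n j * (σA i)⁻¹ :=
      (Commute.inv_left hcomm).eq
    have ih : cA n (i+1) * cA n j * cA n (i+1) = cA n j * cA n (i+1) * cA n j :=
      key n (i+1) j hj (by omega)
    set s := σA (n := n) i
    set c := cA n (i+1)
    set d := cA n j
    rw [hci]
    calc (s⁻¹ * c * s) * d * (s⁻¹ * c * s)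
        = s⁻¹ * c * ((s * d) * s⁻¹) * (c * s) := by group
      _ = s⁻¹ * c * ((d * s) * s⁻¹) * (c * s) := by rw [hcomm]
      _ = s⁻¹ * (c * d * c) * s := by group
      _ = s⁻¹ * (d * c * d) * s := by rw [ih]
      _ = (s⁻¹ * d) * (c * (d * s)) := by group
      _ = (d * s⁻¹) * (c * (s * d)) := by rw [hcommi, ← hcomm]
      _ = d * (s⁻¹ * c * s) * d := by group
  termination_by j - i
  decreasing_by omega

/-- In `B(A_n)`, `c_i c_j c_i = c_j c_i c_j` for all `1 ≤ i, j ≤ n-1` with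
`i ≠ j` (`0`-based indices: `i + 1 < n`, `j + 1 < n`). -/
theorem cA_braid (n : ℕ) (i j : ℕ) (hi : i + 1 < n) (hj : j + 1 < n)
    (hij : i ≠ j) :
    cA n i * cA n j * cA n i = cA n j * cA n i * cA n j := by
  rcases lt_or_gt_of_ne hij with h | h
  · exact key n i j hj h
  · exact (key n j i hi h).symm
end

section
/- Let B(K_n) be the braid group whose Coxeter graph is the complete graph on n vertices: generators a_1,…,a_n with relations a_i a_j a_i = a_j a_i a_j for all i ≠ j. Let B(A_n) be the Artin braid group with generators σ_1,…,σ_n. Then the map a_i ↦ c_i, where c_n := σ_n and c_k := σ_k^{-1} c_{k+1} σ_k, extends to a group homomorphism η : B(K_n) → B(A_n). -/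
/-- The relations of the braid group `B(K_n)` whose Coxeter graph is the
complete graph on `n` vertices: `a_i a_j a_i = a_j a_i a_j` for all `i ≠ j`. -/
def braidRelsK (n : ℕ) : Set (FreeGroup (Fin n)) :=
  {r | ∃ i j : Fin n, i ≠ j ∧
        r = .of i * .of j * .of i * (.of j * .of i * .of j)⁻¹}

/-- The braid group `B(K_n)` of the complete graph on `n` vertices. -/
abbrev BraidK (n : ℕ) := PresentedGroup (braidRelsK n)

/-- The generator `a_{k+1}` of `B(K_n)` (`0`-based index `k`). -/
def aK {n : ℕ} (k : ℕ) : BraidK n :=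
  if h : k < n then PresentedGroup.of ⟨k, h⟩ else 1

section Aux

variable {G : Type*} [Group G]

lemma braid_conj {x y : G} (h : x * y * x = y * x * y) :
    (x⁻¹ * y * x) * y * (x⁻¹ * y * x) = y * (x⁻¹ * y * x) * y := by
  calc (x⁻¹ * y * x) * y * (x⁻¹ * y * x)
      = x⁻¹ * (y * x * y) * x⁻¹ * (y * x) := by group
    _ = x⁻¹ * (x * y * x) * x⁻¹ * (y * x) := by rw [h]
    _ = y * x⁻¹ * (x * y * x) := by group
    _ = y * x⁻¹ * (y * x * y) := by rw [h]
    _ = y * (x⁻¹ * y * x) * y := by group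

lemma braid_step {x y z : G} (hc : Commute x z) (h : y * z * y = z * y * z) :
    (x⁻¹ * y * x) * z * (x⁻¹ * y * x) = z * (x⁻¹ * y * x) * z := by
  have hc1 : x * z = z * x := hc.eq
  have hc2 : x⁻¹ * z = z * x⁻¹ := hc.inv_left.eq
  calc (x⁻¹ * y * x) * z * (x⁻¹ * y * x)
      = x⁻¹ * y * (x * z) * x⁻¹ * (y * x) := by group
    _ = x⁻¹ * y * (z * x) * x⁻¹ * (y * x) := by rw [hc1]
    _ = x⁻¹ * (y * z * y) * x := by group
    _ = x⁻¹ * (z * y * z) * x := by rw [h]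
    _ = (x⁻¹ * z) * y * (z * x) := by group
    _ = (z * x⁻¹) * y * (z * x) := by rw [hc2]
    _ = z * x⁻¹ * y * (x * z) := by rw [← hc1]
    _ = z * (x⁻¹ * y * x) * z := by group

lemma braid_mid {x y z : G} (hxz : Commute x z) (hxy : x * y * x = y * x * y)
    (hyz : y * z * y = z * y * z) :
    x * (y⁻¹ * z * y) * x = (y⁻¹ * z * y) * x * (y⁻¹ * z * y) := by
  have h2' := braid_step hxz hyz
  have h1 : y * x * y⁻¹ = x⁻¹ * y * x := by
    calc y * x * y⁻¹ = x⁻¹ * (x * y * x) * y⁻¹ := by group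
      _ = x⁻¹ * (y * x * y) * y⁻¹ := by rw [hxy]
      _ = x⁻¹ * y * x := by group
  have h2 : (y * x * y⁻¹) * z * (y * x * y⁻¹) = z * (y * x * y⁻¹) * z := by
    rw [h1]; exact h2'
  calc x * (y⁻¹ * z * y) * x
      = y⁻¹ * ((y * x * y⁻¹) * z * (y * x * y⁻¹)) * y := by group
    _ = y⁻¹ * (z * (y * x * y⁻¹) * z) * y := by rw [h2]
    _ = (y⁻¹ * z * y) * x * (y⁻¹ * z * y) := by group

end Aux

lemma rel_eq_one {α : Type*} {rels : Set (FreeGroup α)} {r : FreeGroup α} (hr : r ∈ rels) :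
    PresentedGroup.mk rels r = 1 :=
  (QuotientGroup.eq_one_iff r).mpr (Subgroup.subset_normalClosure hr)

lemma sigma_braid {n : ℕ} {i j : Fin n} (h : (i : ℕ) + 1 = (j : ℕ)) :
    PresentedGroup.of (rels := braidRelsA n) i * .of j * .of i = .of j * .of i * .of j := by
  have := rel_eq_one (rels := braidRelsA n) (Or.inl ⟨i, j, h, rfl⟩)
  rw [map_mul, map_mul, map_inv, map_mul, map_mul, mul_inv_eq_one] at this
  exact this

lemma sigma_comm {n : ℕ} {i j : Fin n} (h : (i : ℕ) + 1 < (j : ℕ)) :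
    Commute (PresentedGroup.of (rels := braidRelsA n) i) (.of j) := by
  have := rel_eq_one (rels := braidRelsA n) (Or.inr ⟨i, j, h, rfl⟩)
  rw [map_mul, map_inv, map_mul, mul_inv_eq_one] at this
  exact this

lemma σA_braid {n k : ℕ} (h : k + 1 < n) :
    σA (n := n) k * σA (k + 1) * σA k = σA (k + 1) * σA k * σA (k + 1) := by
  rw [σA, σA, dif_pos (by omega : k < n), dif_pos h]
  exact sigma_braid rfl

lemma σA_comm {n k l : ℕ} (h : k + 1 < l) : Commute (σA (n := n) k) (σA l) := by
  rw [σA, σA]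
  split_ifs with h1 h2
  · exact sigma_comm h
  · exact Commute.one_right _
  · exact Commute.one_left _
  · exact Commute.one_right _

lemma cA_comm (n k l : ℕ) (h : k + 1 < l) : Commute (σA (n := n) k) (cA n l) := by
  rw [cA]
  split_ifs with h1 h2
  · exact ((σA_comm h).inv_right.mul_right (cA_comm n k (l + 1) (by omega))).mul_right
      (σA_comm h)
  · exact σA_comm h
  · exact Commute.one_right _
  termination_by n - l
  decreasing_by omega

lemma braidB (n k : ℕ) (h : k + 1 < n) :
    σA (n := n) k * cA n (k + 1) * σA k = cA n (k + 1) * σA k * cA n (k + 1) := by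
  rw [cA]
  split_ifs with h1
  · exact braid_mid (cA_comm n k (k + 1 + 1) (by omega)) (σA_braid h)
      (braidB n (k + 1) h1)
  · exact σA_braid h
  termination_by n - k
  decreasing_by omega

lemma braidMain (n i j : ℕ) (hij : i < j) (hj : j < n) :
    cA n i * cA n j * cA n i = cA n j * cA n i * cA n j := by
  have hi1 : i + 1 < n := by omega
  rcases eq_or_lt_of_le (by omega : i + 1 ≤ j) with heq | hlt
  · subst heq
    rw [cA, dif_pos hi1]
    exact braid_conj (braidB n i hi1)
  · rw [cA, dif_pos hi1]
    exact braid_step (cA_comm n i j hlt) (braidMain n (i + 1) j hlt hj)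
  termination_by j - i
  decreasing_by omega

/-- The map `a_i ↦ c_i` extends to a group homomorphism
`η : B(K_n) → B(A_n)`. -/
theorem exists_eta (n : ℕ) :
    ∃ η : BraidK n →* BraidA n, ∀ i : Fin n, η (aK (i : ℕ)) = cA n (i : ℕ) := by
  have hrel : ∀ r ∈ braidRelsK n,
      FreeGroup.lift (fun i : Fin n => cA n (i : ℕ)) r = 1 := by
    rintro r ⟨i, j, hij, rfl⟩
    rw [map_mul, map_mul, map_mul, map_inv, map_mul, map_mul, FreeGroup.lift_apply_of,
      FreeGroup.lift_apply_of, mul_inv_eq_one]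
    rcases lt_or_gt_of_ne (fun h : (i : ℕ) = (j : ℕ) => hij (Fin.ext h)) with h | h
    · exact braidMain n i j h j.isLt
    · exact (braidMain n j i h i.isLt).symm
  refine ⟨PresentedGroup.toGroup hrel, fun i => ?_⟩
  rw [aK, dif_pos i.isLt]
  simp only [Fin.eta] at *
  exact PresentedGroup.toGroup.of hrel (x := ⟨(i : ℕ), i.isLt⟩)
end

section
/- In the Artin braid group B(A_n), the elements σ_{n-1} and σ_n² satisfy the B₂-type relation: σ_{n-1} σ_n² σ_{n-1} σ_n² = σ_n² σ_{n-1} σ_n² σ_{n-1}. -/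
lemma braid_rel {n : ℕ} (i j : Fin n) (hij : (i : ℕ) + 1 = (j : ℕ)) :
    (PresentedGroup.of i : BraidA n) * PresentedGroup.of j * PresentedGroup.of i =
      PresentedGroup.of j * PresentedGroup.of i * PresentedGroup.of j := by
  have hr : (FreeGroup.of i * FreeGroup.of j * FreeGroup.of i *
      (FreeGroup.of j * FreeGroup.of i * FreeGroup.of j)⁻¹) ∈ braidRelsA n :=
    Or.inl ⟨i, j, hij, rfl⟩
  have h1 : (QuotientGroup.mk (FreeGroup.of i * FreeGroup.of j * FreeGroup.of i *
      (FreeGroup.of j * FreeGroup.of i * FreeGroup.of j)⁻¹) : BraidA n) = 1 := by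
    rw [QuotientGroup.eq_one_iff]
    exact Subgroup.subset_normalClosure hr
  have h2 : (PresentedGroup.of i : BraidA n) * PresentedGroup.of j * PresentedGroup.of i *
      (PresentedGroup.of j * PresentedGroup.of i * PresentedGroup.of j)⁻¹ = 1 := by
    exact h1
  group at h2 ⊢
  exact mul_inv_eq_one.mp (by simpa [mul_assoc] using h2)

/-- In the Artin braid group `B(A_n)` (`n ≥ 2`), the elements `σ_{n-1}` and
`σ_n²` satisfy the `B₂`-type relation
`σ_{n-1} σ_n² σ_{n-1} σ_n² = σ_n² σ_{n-1} σ_n² σ_{n-1}`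
(`0`-based: `σ_{n-1} = σA (n-2)` and `σ_n = σA (n-1)`). -/
theorem σA_B2_relation (n : ℕ) (hn : 2 ≤ n) :
    σA (n := n) (n - 2) * (σA (n := n) (n - 1)) ^ 2 * σA (n := n) (n - 2) *
        (σA (n := n) (n - 1)) ^ 2
      = (σA (n := n) (n - 1)) ^ 2 * σA (n := n) (n - 2) *
        (σA (n := n) (n - 1)) ^ 2 * σA (n := n) (n - 2) := by
  have h1 : n - 2 < n := by omega
  have h2 : n - 1 < n := by omega
  set a : BraidA n := σA (n - 2) with ha
  set b : BraidA n := σA (n - 1) with hb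
  have h : a * b * a = b * a * b := by
    rw [ha, hb, σA, σA, dif_pos h1, dif_pos h2]
    exact braid_rel ⟨n - 2, h1⟩ ⟨n - 1, h2⟩ (by simp; omega)
  calc a * b ^ 2 * a * b ^ 2 = a * b * (b * a * b) * b := by simp [pow_two, mul_assoc]
    _ = a * b * (a * b * a) * b := by rw [← h]
    _ = (a * b * a) * (b * a * b) := by group
    _ = (b * a * b) * (a * b * a) := by rw [h]
    _ = b * (a * b * a) * (b * a) := by group
    _ = b * (b * a * b) * (b * a) := by rw [h]
    _ = b ^ 2 * a * b ^ 2 * a := by simp [pow_two, mul_assoc]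
end
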